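/- For every integer m ≥ 1, every integer r ≥ 2, every vector a = (a_1,…,a_r) of nonzero real numbers and all x_2,…,x_r ∈ ℝ, one has ζ_fml(1−m, a, (0, x_2,…,x_r)) = ζ_fml(1−m, a, (1, x_2,…,x_r)) + ζ_fml(1−m, (a_2,…,a_r), (x_2,…,x_r)). -/

import Mathlib

open scoped BigOperators

/-- The formal multiple zeta value `zetaFml m a x = ζ_fml(1 - m, a, x)` of the paper:
`(-1)^r (m-1)! ∑_{l, Σ l i = m + r - 1} ∏_i B_{l i}(x i) * (a i)^(l i - 1) / (l i)!`,
where `B_l` is the `l`-th Bernoulli polynomial (normalized with `B₁(X) = X - 1/2`)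
and `(a i)^(l i - 1)` is an integer (`zpow`) power. -/
noncomputable def zetaFml (m : ℕ) {r : ℕ} (a x : Fin r → ℝ) : ℝ :=
  (-1 : ℝ) ^ r * (Nat.factorial (m - 1)) *
    ∑ l ∈ Finset.Nat.antidiagonalTuple r (m + r - 1),
      ∏ i, Polynomial.aeval (x i) (Polynomial.bernoulli (l i)) * a i ^ ((l i : ℤ) - 1)
        / (Nat.factorial (l i))

lemma sum_antidiagonalTuple_succ {M : Type*} [AddCommMonoid M] (k n : ℕ)
    (f : (Fin (k + 1) → ℕ) → M) :
    ∑ l ∈ Finset.Nat.antidiagonalTuple (k + 1) n, f l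
      = ∑ p ∈ Finset.HasAntidiagonal.antidiagonal n,
          ∑ t ∈ Finset.Nat.antidiagonalTuple k p.2, f (Fin.cons p.1 t) := by
  rw [Finset.sum_sigma']
  refine (Finset.sum_nbij' (fun q => Fin.cons q.1.1 q.2)
    (fun l => (⟨(l 0, ∑ i : Fin k, l i.succ), Fin.tail l⟩ : (_ : ℕ × ℕ) × (Fin k → ℕ)))
    ?_ ?_ ?_ ?_ ?_).symm
  · rintro ⟨⟨p1, p2⟩, t⟩ hq
    simp only [Finset.mem_sigma, Finset.HasAntidiagonal.mem_antidiagonal,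
      Finset.Nat.mem_antidiagonalTuple] at hq ⊢
    rw [Fin.sum_cons, hq.2, hq.1]
  · intro l hl
    simp only [Finset.Nat.mem_antidiagonalTuple, Finset.mem_sigma,
      Finset.HasAntidiagonal.mem_antidiagonal] at hl ⊢
    exact ⟨by rw [← hl, Fin.sum_univ_succ], rfl⟩
  · rintro ⟨⟨p1, p2⟩, t⟩ hq
    simp only [Finset.mem_sigma, Finset.HasAntidiagonal.mem_antidiagonal,
      Finset.Nat.mem_antidiagonalTuple] at hq
    simp [Fin.tail_cons, hq.2]
  · intro l hl
    simp [Fin.cons_self_tail]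
  · intro q hq
    rfl

theorem zetaFml_zero_first (m : ℕ) (hm : 1 ≤ m) (r : ℕ) (a : Fin (r + 2) → ℝ)
    (ha : ∀ i, a i ≠ 0) (x : Fin (r + 1) → ℝ) :
    zetaFml m a (Fin.cons 0 x)
      = zetaFml m a (Fin.cons 1 x) + zetaFml m (fun i => a i.succ) x := by
  have key : ∀ c : ℝ, zetaFml m a (Fin.cons c x)
      = (-1 : ℝ) ^ (r + 2) * (Nat.factorial (m - 1)) *
          ∑ p ∈ Finset.HasAntidiagonal.antidiagonal (m + r + 1),
            ∑ t ∈ Finset.Nat.antidiagonalTuple (r + 1) p.2,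
              (Polynomial.aeval c (Polynomial.bernoulli p.1) * a 0 ^ ((p.1 : ℤ) - 1)
                  / (Nat.factorial p.1))
                * ∏ i, Polynomial.aeval (x i) (Polynomial.bernoulli (t i))
                    * a i.succ ^ ((t i : ℤ) - 1) / (Nat.factorial (t i)) := by
    intro c
    rw [zetaFml]
    have h1 : m + (r + 2) - 1 = m + r + 1 := by omega
    rw [h1, sum_antidiagonalTuple_succ]
    congr 1
    refine Finset.sum_congr rfl fun p _ => Finset.sum_congr rfl fun t _ => ?_
    rw [Fin.prod_univ_succ]
    simp only [Fin.cons_zero, Fin.cons_succ]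
  rw [key 0, key 1, zetaFml]
  have h2 : m + (r + 1) - 1 = m + r := by omega
  rw [h2]
  rw [← sub_eq_iff_eq_add']
  rw [← mul_sub, ← Finset.sum_sub_distrib]
  have h3 : ∀ p ∈ Finset.HasAntidiagonal.antidiagonal (m + r + 1),
      ((∑ t ∈ Finset.Nat.antidiagonalTuple (r + 1) p.2,
          (Polynomial.aeval (0:ℝ) (Polynomial.bernoulli p.1) * a 0 ^ ((p.1 : ℤ) - 1)
              / (Nat.factorial p.1))
            * ∏ i, Polynomial.aeval (x i) (Polynomial.bernoulli (t i))
                * a i.succ ^ ((t i : ℤ) - 1) / (Nat.factorial (t i)))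
        - ∑ t ∈ Finset.Nat.antidiagonalTuple (r + 1) p.2,
          (Polynomial.aeval (1:ℝ) (Polynomial.bernoulli p.1) * a 0 ^ ((p.1 : ℤ) - 1)
              / (Nat.factorial p.1))
            * ∏ i, Polynomial.aeval (x i) (Polynomial.bernoulli (t i))
                * a i.succ ^ ((t i : ℤ) - 1) / (Nat.factorial (t i)))
      = (if p.1 = 1 then (-1 : ℝ) else 0) *
          ∑ t ∈ Finset.Nat.antidiagonalTuple (r + 1) p.2,
            ∏ i, Polynomial.aeval (x i) (Polynomial.bernoulli (t i))
                * a i.succ ^ ((t i : ℤ) - 1) / (Nat.factorial (t i)) := by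
    intro p _
    rw [← Finset.sum_sub_distrib, Finset.mul_sum]
    refine Finset.sum_congr rfl fun t _ => ?_
    rw [← sub_mul, div_sub_div_same, ← sub_mul]
    have e0 : (Polynomial.aeval (0:ℝ)) (Polynomial.bernoulli p.1)
        = algebraMap ℚ ℝ (_root_.bernoulli p.1) := by
      rw [show (0:ℝ) = algebraMap ℚ ℝ 0 by simp,
        Polynomial.aeval_algebraMap_apply_eq_algebraMap_eval,
        Polynomial.bernoulli_eval_zero]
    have e1 : (Polynomial.aeval (1:ℝ)) (Polynomial.bernoulli p.1)
        = algebraMap ℚ ℝ (bernoulli' p.1) := by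
      rw [show (1:ℝ) = algebraMap ℚ ℝ 1 by simp,
        Polynomial.aeval_algebraMap_apply_eq_algebraMap_eval,
        Polynomial.bernoulli_eval_one]
    rw [e0, e1, ← map_sub]
    by_cases h : p.1 = 1
    · simp only [h, if_pos, bernoulli_one, bernoulli'_one]
      norm_num
    · rw [bernoulli_eq_bernoulli'_of_ne_one h]
      simp [h]
  rw [Finset.sum_congr rfl h3]
  rw [Finset.sum_eq_single_of_mem ((1, m + r))
    (Finset.HasAntidiagonal.mem_antidiagonal.mpr (by omega))
    (fun p hp hne => by
      have hp' := Finset.HasAntidiagonal.mem_antidiagonal.mp hp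
      have h1 : p.1 ≠ 1 := by
        intro h1
        exact hne (Prod.ext h1 (by omega))
      rw [if_neg h1, zero_mul])]
  rw [if_pos rfl]
  ring
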